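/- For every dimension d ≥ 3 there exist constants C > 0 and c > 0 such that for all T ≥ 1 and all t > 0, if (X_k)_{k≥0} is a simple random walk on ℤ^d started at 0 and N_T is an independent geometric random variable with P(N_T = k) = (1/(T+1))(T/(T+1))^k for k ≥ 0, then P( max_{0 ≤ i ≤ N_T} |X_i| ≥ t·⌊√T⌋ ) ≤ C·exp(−c·t^{2/3}). -/

import Mathlib

open MeasureTheory ProbabilityTheory Finset
open scoped ENNReal

noncomputable section

/-- The `2d` unit vectors `±eᵢ` in `ℤ^d`. -/
def stepSet (d : ℕ) : Finset (Fin d → ℤ) :=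
  (Finset.univ.image fun i : Fin d => Pi.single i (1 : ℤ)) ∪
    (Finset.univ.image fun i : Fin d => Pi.single i (-1 : ℤ))

/-- `IsSRW P d X x` : under the probability measure `P`, the process `X` is a simple random
walk on `ℤ^d` started at `x`: `X 0 = x`, the increments `X (k+1) - X k` are independent,
and each increment is uniformly distributed on the `2d` unit vectors `±eᵢ`. -/
def IsSRW {Ω : Type} [MeasurableSpace Ω] (P : Measure Ω) (d : ℕ)
    (X : ℕ → Ω → (Fin d → ℤ)) (x : Fin d → ℤ) : Prop :=
  (∀ ω, X 0 ω = x) ∧ (∀ k, Measurable (X k)) ∧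
    iIndepFun (fun k ω => X (k + 1) ω - X k ω) P ∧
    ∀ k, ∀ v ∈ stepSet d, P {ω | X (k + 1) ω - X k ω = v} = (2 * d : ℝ≥0∞)⁻¹

/-- `IsGeom P T N` : `N` is a geometric random variable with
`P(N = k) = (1/(T+1)) (T/(T+1))^k`. -/
def IsGeom {Ω : Type} [MeasurableSpace Ω] (P : Measure Ω) (T : ℝ) (N : Ω → ℕ) : Prop :=
  Measurable N ∧
    ∀ k : ℕ, P {ω | N ω = k} = ENNReal.ofReal ((1 / (T + 1)) * (T / (T + 1)) ^ k)

/-- `avoidProb d A n x` : probability that a simple random walk started at `x`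
stays out of `A` at all times `1, …, n`. -/
def avoidProb (d : ℕ) (A : Finset (Fin d → ℤ)) : ℕ → (Fin d → ℤ) → ℝ
  | 0, _ => 1
  | n + 1, x =>
      (2 * d : ℝ)⁻¹ * ∑ v ∈ stepSet d, if x + v ∈ A then 0 else avoidProb d A n (x + v)

/-- Escape probability `Es_A(x) = P_x(X_k ∉ A for all k ≥ 1)`, as the (decreasing) limit of
the finite–horizon avoidance probabilities. -/
def esc (d : ℕ) (A : Finset (Fin d → ℤ)) (x : Fin d → ℤ) : ℝ :=
  ⨅ n : ℕ, avoidProb d A n x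

/-- Capacity `cap(A) = ∑_{x ∈ A} Es_A(x)` of a finite set `A ⊂ ℤ^d`. -/
def cap (d : ℕ) (A : Finset (Fin d → ℤ)) : ℝ := ∑ x ∈ A, esc d A x

/-- Killed escape probability `Es_A^{(T)}(x) = P_x^{(T)}(X_k ∉ A for all 1 ≤ k ≤ N_T)`. -/
def escT (d : ℕ) (T : ℝ) (A : Finset (Fin d → ℤ)) (x : Fin d → ℤ) : ℝ :=
  ∑' n : ℕ, (1 / (T + 1)) * (T / (T + 1)) ^ n * avoidProb d A n x

/-- `T`-capacity `cap^{(T)}(A) = ∑_{x ∈ A} Es_A^{(T)}(x)`. -/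
def capT (d : ℕ) (T : ℝ) (A : Finset (Fin d → ℤ)) : ℝ := ∑ x ∈ A, escT d T A x

/-- `F_d(a)`: `√a` for `d = 3`, `a / log a` for `d = 4`, and `a` for `d ≥ 5`. -/
def Fd (d : ℕ) (a : ℝ) : ℝ :=
  if d = 3 then Real.sqrt a else if d = 4 then a / Real.log a else a

/-- The ℓ∞ norm of a point of `ℤ^d`, as a real number. -/
def linf {d : ℕ} (x : Fin d → ℤ) : ℝ :=
  ((Finset.univ.sup fun j => (x j).natAbs : ℕ) : ℝ)

/-- `n_T = ⌊√T⌋`. -/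
def nT (T : ℝ) : ℕ := Nat.floor (Real.sqrt T)

/-- The range `{X_0, …, X_m}` of a walk, as a finite subset of `ℤ^d`. -/
def walkRange {Ω : Type} {d : ℕ} (X : ℕ → Ω → (Fin d → ℤ)) (m : ℕ) (ω : Ω) :
    Finset (Fin d → ℤ) :=
  (Finset.range (m + 1)).image fun k => X k ω

section Helpers

variable {d : ℕ}



variable {d : ℕ}

lemma single_one_ne_single_neg (i i' : Fin d) :
    (Pi.single i (1 : ℤ) : Fin d → ℤ) ≠ Pi.single i' (-1 : ℤ) := by
  intro h
  have h1 : (Pi.single i (1 : ℤ) : Fin d → ℤ) i = (Pi.single i' (-1 : ℤ) : Fin d → ℤ) i := congrFun h i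
  rcases eq_or_ne i i' with rfl | hne
  · rw [Pi.single_eq_same, Pi.single_eq_same] at h1; omega
  · rw [Pi.single_eq_same, Pi.single_eq_of_ne hne] at h1; omega

lemma single_inj (a : ℤ) (ha : a ≠ 0) :
    Function.Injective (fun i : Fin d => Pi.single i a) := by
  intro i i' h
  by_contra hne
  have h1 : (Pi.single i a : Fin d → ℤ) i = (Pi.single i' a : Fin d → ℤ) i := congrFun h i
  rw [Pi.single_eq_same, Pi.single_eq_of_ne hne] at h1
  exact ha h1

lemma sum_stepSet {M : Type*} [AddCommMonoid M] (f : (Fin d → ℤ) → M) :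
    ∑ v ∈ stepSet d, f v =
      ∑ i : Fin d, f (Pi.single i 1) + ∑ i : Fin d, f (Pi.single i (-1)) := by
  rw [stepSet, Finset.sum_union, Finset.sum_image (fun i _ j _ h => single_inj 1 one_ne_zero h),
    Finset.sum_image (fun i _ j _ h => single_inj (-1) (by norm_num) h)]
  rw [Finset.disjoint_left]
  rintro v hv hv'
  simp only [Finset.mem_image, Finset.mem_univ, true_and] at hv hv'
  obtain ⟨i, rfl⟩ := hv
  obtain ⟨i', hi'⟩ := hv'
  exact single_one_ne_single_neg i i' hi'.symm

lemma card_stepSet : (stepSet d).card = 2 * d := by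
  have := sum_stepSet (d := d) (fun _ => (1 : ℕ))
  rw [Finset.card_eq_sum_ones, this]
  simp only [Finset.sum_const, smul_eq_mul, mul_one, Finset.card_univ, Fintype.card_fin]
  ring

lemma linf_nonneg (x : Fin d → ℤ) : 0 ≤ linf x := Nat.cast_nonneg _

lemma linf_triangle (x y : Fin d → ℤ) : linf x ≤ linf y + linf (x - y) := by
  unfold linf
  rw [← Nat.cast_add]
  refine Nat.cast_le.2 (Finset.sup_le fun j _ => ?_)
  calc (x j).natAbs = ((y j) + (x j - y j)).natAbs := by ring_nf
    _ ≤ (y j).natAbs + (x j - y j).natAbs := Int.natAbs_add_le _ _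
    _ ≤ _ := add_le_add
        (Finset.le_sup (f := fun j => (y j).natAbs) (Finset.mem_univ j))
        (Finset.le_sup (f := fun j => ((x - y) j).natAbs) (Finset.mem_univ j))

lemma exists_coord {α : ℝ} {x : Fin d → ℤ} (hα : 0 < α) (h : α ≤ linf x) :
    ∃ j : Fin d, α ≤ ((x j : ℤ) : ℝ) ∨ α ≤ -((x j : ℤ) : ℝ) := by
  rcases Nat.eq_zero_or_pos d with rfl | hd
  · exfalso
    simp only [linf, Finset.univ_eq_empty, Finset.sup_empty] at h
    simp at h; linarith
  · haveI : Nonempty (Fin d) := ⟨⟨0, hd⟩⟩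
    have hne : (Finset.univ : Finset (Fin d)).Nonempty := Finset.univ_nonempty
    obtain ⟨j, _, hj⟩ := Finset.exists_mem_eq_sup Finset.univ hne fun j => (x j).natAbs
    rw [linf, hj] at h
    have : α ≤ |((x j : ℤ) : ℝ)| := by
      rw [← Int.cast_abs, Int.abs_eq_natAbs, Int.cast_natCast]
      exact h
    rcases abs_cases ((x j : ℤ) : ℝ) with ⟨he, _⟩ | ⟨he, _⟩
    · exact ⟨j, Or.inl (he ▸ this)⟩
    · exact ⟨j, Or.inr (by rw [he] at this; linarith)⟩


section Walk

variable {Ω : Type} [MeasurableSpace Ω] {P : Measure Ω} {X : ℕ → Ω → (Fin d → ℤ)}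

lemma meas_incr (hX : IsSRW P d X 0) (k : ℕ) :
    Measurable (fun ω => X (k + 1) ω - X k ω) := by
  have h : (fun ω => X (k + 1) ω - X k ω) =
      (fun p : (Fin d → ℤ) × (Fin d → ℤ) => p.1 - p.2) ∘ fun ω => (X (k + 1) ω, X k ω) := rfl
  rw [h]
  exact Measurable.of_discrete.comp ((hX.2.1 _).prodMk (hX.2.1 _))

lemma X_eq_sum (hX : IsSRW P d X 0) (j : ℕ) (ω : Ω) :
    X j ω = ∑ i ∈ Finset.range j, (X (i + 1) ω - X i ω) := by
  induction j with
  | zero => simp [hX.1 ω]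
  | succ n ih => rw [Finset.sum_range_succ, ← ih]; abel

lemma X_sub_eq_sum (hX : IsSRW P d X 0) {k m : ℕ} (hkm : k ≤ m) (ω : Ω) :
    X m ω - X k ω = ∑ i ∈ Finset.Ico k m, (X (i + 1) ω - X i ω) := by
  rw [X_eq_sum hX m, X_eq_sum hX k, Finset.sum_Ico_eq_sub _ hkm]

lemma meas_set_incr (hX : IsSRW P d X 0) (k : ℕ) (S : Set (Fin d → ℤ)) :
    MeasurableSet {ω | (X (k + 1) ω - X k ω) ∈ S} :=
  meas_incr hX k MeasurableSet.of_discrete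

lemma ae_incr_mem (hX : IsSRW P d X 0) (hd : 0 < d) (k : ℕ) :
    ∀ᵐ ω ∂P, (X (k + 1) ω - X k ω) ∈ stepSet d := by
  haveI : IsProbabilityMeasure P := hX.2.2.1.isProbabilityMeasure
  have hunion : {ω | (X (k + 1) ω - X k ω) ∈ stepSet d} =
      ⋃ v ∈ stepSet d, {ω | X (k + 1) ω - X k ω = v} := by
    ext ω; simp [Set.mem_iUnion]
  have hmeas : ∀ v ∈ stepSet d, MeasurableSet {ω | X (k + 1) ω - X k ω = v} := fun v _ =>
    meas_incr hX k (measurableSet_singleton v)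
  have hdisj : Set.PairwiseDisjoint (stepSet d : Set (Fin d → ℤ))
      fun v => {ω | X (k + 1) ω - X k ω = v} := by
    intro v _ w _ hvw
    refine Set.disjoint_left.2 fun ω h1 h2 => hvw ?_
    exact h1.symm.trans h2
  have h1 : P {ω | (X (k + 1) ω - X k ω) ∈ stepSet d} = 1 := by
    rw [hunion, measure_biUnion_finset hdisj hmeas]
    have : ∀ v ∈ stepSet d, P {ω | X (k + 1) ω - X k ω = v} = (2 * d : ℝ≥0∞)⁻¹ :=
      fun v hv => hX.2.2.2 k v hv
    rw [Finset.sum_congr rfl this, Finset.sum_const, card_stepSet]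
    have hne : (2 * (d : ℝ≥0∞)) ≠ 0 := by
      have : (d : ℝ≥0∞) ≠ 0 := by exact_mod_cast hd.ne'
      simp [this]
    have hnetop : (2 * (d : ℝ≥0∞)) ≠ ⊤ := by
      simp [ENNReal.mul_ne_top, ENNReal.natCast_ne_top]
    rw [nsmul_eq_mul]
    push_cast
    rw [ENNReal.mul_inv_cancel hne hnetop]
  have h0 : P {ω | ¬ (X (k + 1) ω - X k ω) ∈ stepSet d} = 0 := by
    have hms : MeasurableSet {ω | (X (k + 1) ω - X k ω) ∈ stepSet d} := meas_set_incr hX k _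
    have := measure_compl hms (measure_ne_top P _)
    rw [h1, measure_univ] at this
    simpa [Set.compl_setOf] using this
  exact ae_iff.2 h0

lemma integral_incr (hX : IsSRW P d X 0) (hd : 0 < d) (k : ℕ) (g : (Fin d → ℤ) → ℝ) :
    Integrable (fun ω => g (X (k + 1) ω - X k ω)) P ∧
      ∫ ω, g (X (k + 1) ω - X k ω) ∂P = (2 * d : ℝ)⁻¹ * ∑ v ∈ stepSet d, g v := by
  haveI : IsProbabilityMeasure P := hX.2.2.1.isProbabilityMeasure
  set F : Ω → ℝ := fun ω =>
    ∑ v ∈ stepSet d, Set.indicator {ω' | X (k + 1) ω' - X k ω' = v} (fun _ => g v) ω with hF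
  have hmeas : ∀ v : Fin d → ℤ, MeasurableSet {ω' | X (k + 1) ω' - X k ω' = v} := fun v =>
    meas_incr hX k (measurableSet_singleton v)
  have hae : (fun ω => g (X (k + 1) ω - X k ω)) =ᵐ[P] F := by
    filter_upwards [ae_incr_mem hX hd k] with ω hω
    show _ = ∑ v ∈ stepSet d, Set.indicator {ω' | X (k + 1) ω' - X k ω' = v} (fun _ => g v) ω
    rw [Finset.sum_eq_single (X (k + 1) ω - X k ω)]
    · rw [Set.indicator_of_mem (by exact rfl)]
    · intro v _ hv
      rw [Set.indicator_of_notMem]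
      exact fun h => hv (h.symm)
    · intro h; exact absurd hω h
  have hFint : Integrable F P := by
    refine integrable_finset_sum _ fun v _ => ?_
    exact (integrable_const (g v)).indicator (hmeas v)
  have hint : Integrable (fun ω => g (X (k + 1) ω - X k ω)) P := hFint.congr hae.symm
  refine ⟨hint, ?_⟩
  rw [integral_congr_ae hae, hF, integral_finset_sum _ fun v _ =>
    (integrable_const (g v)).indicator (hmeas v)]
  have hval : ∀ v ∈ stepSet d,
      ∫ ω, Set.indicator {ω' | X (k + 1) ω' - X k ω' = v} (fun _ => g v) ω ∂P
        = (2 * d : ℝ)⁻¹ * g v := by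
    intro v hv
    rw [MeasureTheory.integral_indicator_const _ (hmeas v), measureReal_def, hX.2.2.2 k v hv]
    rw [smul_eq_mul]
    congr 1
    rw [ENNReal.toReal_inv, ENNReal.toReal_mul]
    norm_num
  rw [Finset.sum_congr rfl hval, ← Finset.mul_sum]

lemma mgf_incr_le (hX : IsSRW P d X 0) (hd : 0 < d) (k : ℕ) (j : Fin d) {σ : ℝ}
    (hσ : σ = 1 ∨ σ = -1) (l : ℝ) :
    mgf (fun ω => σ * (((X (k + 1) ω - X k ω) j : ℤ) : ℝ)) P l ≤ Real.exp (l ^ 2 / 2) ∧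
      Integrable (fun ω => Real.exp (l * (σ * (((X (k + 1) ω - X k ω) j : ℤ) : ℝ)))) P := by
  have hd' : (1 : ℝ) ≤ d := by exact_mod_cast hd
  set g : (Fin d → ℤ) → ℝ := fun v => Real.exp (l * (σ * ((v j : ℤ) : ℝ))) with hg
  obtain ⟨hint, hval⟩ := integral_incr hX hd k g
  have hsum : ∑ v ∈ stepSet d, g v = 2 * (d - 1) + 2 * Real.cosh l := by
    rw [sum_stepSet g]
    have h1 : ∀ i : Fin d, g (Pi.single i 1) =
        1 + (if i = j then Real.exp (l * σ) - 1 else 0) := by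
      intro i
      rcases eq_or_ne i j with rfl | hij
      · simp [hg, Pi.single_eq_same]
      · rw [hg]
        simp only [Pi.single_eq_of_ne (Ne.symm hij)]
        simp [hij]
    have h2 : ∀ i : Fin d, g (Pi.single i (-1)) =
        1 + (if i = j then Real.exp (-(l * σ)) - 1 else 0) := by
      intro i
      rcases eq_or_ne i j with rfl | hij
      · simp only [hg, Pi.single_eq_same]
        rw [show l * (σ * ((-1 : ℤ) : ℝ)) = -(l * σ) by push_cast; ring]
        simp
      · rw [hg]
        simp only [Pi.single_eq_of_ne (Ne.symm hij)]
        simp [hij]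
    rw [Finset.sum_congr rfl fun i _ => h1 i, Finset.sum_congr rfl fun i _ => h2 i]
    rw [Finset.sum_add_distrib, Finset.sum_add_distrib, Finset.sum_ite_eq' Finset.univ j,
      Finset.sum_ite_eq' Finset.univ j]
    simp only [Finset.mem_univ, if_true, Finset.sum_const, Finset.card_univ, Fintype.card_fin,
      nsmul_eq_mul, mul_one]
    have hcosh : Real.exp (l * σ) + Real.exp (-(l * σ)) = 2 * Real.cosh l := by
      rcases hσ with rfl | rfl
      · rw [Real.cosh_eq]; ring
      · rw [Real.cosh_eq, show l * (-1 : ℝ) = -l by ring, neg_neg]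
        ring
    linarith [hcosh]
  have hmgf : mgf (fun ω => σ * (((X (k + 1) ω - X k ω) j : ℤ) : ℝ)) P l
      = (2 * d : ℝ)⁻¹ * (2 * (d - 1) + 2 * Real.cosh l) := by
    rw [mgf, ← hsum, ← hval]
  constructor
  · rw [hmgf]
    have hcosh1 : (1 : ℝ) ≤ Real.cosh l := Real.one_le_cosh l
    have hle : (2 * d : ℝ)⁻¹ * (2 * (d - 1) + 2 * Real.cosh l) ≤ Real.cosh l := by
      rw [inv_mul_le_iff₀ (by positivity)]
      nlinarith
    exact hle.trans (Real.cosh_le_exp_half_sq l)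
  · exact hint

lemma chernoff_window (hX : IsSRW P d X 0) (hd : 0 < d) {k m : ℕ} (hkm : k ≤ m) {α l : ℝ}
    (hα : 0 < α) (hl : 0 ≤ l) :
    P {ω | α ≤ linf (X m ω - X k ω)} ≤
      ENNReal.ofReal ((2 * d) * Real.exp (l ^ 2 * m / 2 - l * α)) := by
  haveI : IsProbabilityMeasure P := hX.2.2.1.isProbabilityMeasure
  set e : ℝ := Real.exp (l ^ 2 * m / 2 - l * α) with he
  have he0 : 0 < e := Real.exp_pos _
  -- single coordinate/sign bound
  have key : ∀ (j : Fin d) (σ : ℝ), σ = 1 ∨ σ = -1 →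
      P {ω | α ≤ σ * (((X m ω - X k ω) j : ℤ) : ℝ)} ≤ ENNReal.ofReal e := by
    intro j σ hσ
    set Y : ℕ → Ω → ℝ := fun i ω => σ * (((X (i + 1) ω - X i ω) j : ℤ) : ℝ) with hY
    have hYmeas : ∀ i, Measurable (Y i) := by
      intro i
      have : Y i = (fun v : Fin d → ℤ => σ * ((v j : ℤ) : ℝ)) ∘ fun ω => X (i + 1) ω - X i ω := rfl
      rw [this]
      exact Measurable.of_discrete.comp (meas_incr hX i)
    have hYindep : iIndepFun Y P := by
      have := hX.2.2.1.comp (fun _ => fun v : Fin d → ℤ => σ * ((v j : ℤ) : ℝ))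
        (fun _ => Measurable.of_discrete)
      exact this
    have hYint : ∀ i ∈ Finset.Ico k m, Integrable (fun ω => Real.exp (l * Y i ω)) P :=
      fun i _ => (mgf_incr_le hX hd i j hσ l).2
    have hZint : Integrable (fun ω => Real.exp (l * (∑ i ∈ Finset.Ico k m, Y i) ω)) P :=
      hYindep.integrable_exp_mul_sum hYmeas hYint
    have hZeq : ∀ ω, σ * (((X m ω - X k ω) j : ℤ) : ℝ) = (∑ i ∈ Finset.Ico k m, Y i) ω := by
      intro ω
      rw [Finset.sum_apply, hY]
      rw [X_sub_eq_sum hX hkm ω, Finset.sum_apply]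
      push_cast
      rw [Finset.mul_sum]
    have hset : {ω | α ≤ σ * (((X m ω - X k ω) j : ℤ) : ℝ)} =
        {ω | α ≤ (∑ i ∈ Finset.Ico k m, Y i) ω} := by
      ext ω; simp only [Set.mem_setOf_eq, hZeq ω]
    have hcher := measure_ge_le_exp_mul_mgf (μ := P) (X := ∑ i ∈ Finset.Ico k m, Y i) α hl hZint
    have hmgf : mgf (∑ i ∈ Finset.Ico k m, Y i) P l ≤ Real.exp (l ^ 2 * m / 2) := by
      rw [hYindep.mgf_sum hYmeas]
      calc ∏ i ∈ Finset.Ico k m, mgf (Y i) P l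
          ≤ ∏ i ∈ Finset.Ico k m, Real.exp (l ^ 2 / 2) :=
            Finset.prod_le_prod (fun i _ => mgf_nonneg)
              (fun i _ => (mgf_incr_le hX hd i j hσ l).1)
        _ = Real.exp (l ^ 2 / 2) ^ (m - k) := by rw [Finset.prod_const, Nat.card_Ico]
        _ = Real.exp ((m - k : ℕ) * (l ^ 2 / 2)) := by rw [← Real.exp_nat_mul]
        _ ≤ Real.exp (l ^ 2 * m / 2) := by
            apply Real.exp_le_exp.2
            have : ((m - k : ℕ) : ℝ) ≤ (m : ℝ) := by
              exact_mod_cast Nat.sub_le m k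
            nlinarith [sq_nonneg l]
    have htoReal : (P {ω | α ≤ (∑ i ∈ Finset.Ico k m, Y i) ω}).toReal ≤ e := by
      refine hcher.trans ?_
      rw [he]
      calc Real.exp (-l * α) * mgf (∑ i ∈ Finset.Ico k m, Y i) P l
          ≤ Real.exp (-l * α) * Real.exp (l ^ 2 * m / 2) := by
            exact mul_le_mul_of_nonneg_left hmgf (Real.exp_nonneg _)
        _ = Real.exp (l ^ 2 * m / 2 - l * α) := by rw [← Real.exp_add]; ring_nf
    rw [hset]
    calc P {ω | α ≤ (∑ i ∈ Finset.Ico k m, Y i) ω}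
        = ENNReal.ofReal ((P {ω | α ≤ (∑ i ∈ Finset.Ico k m, Y i) ω}).toReal) := by
          rw [ENNReal.ofReal_toReal (measure_ne_top P _)]
      _ ≤ ENNReal.ofReal e := ENNReal.ofReal_le_ofReal htoReal
  -- union bound
  have hsub : {ω | α ≤ linf (X m ω - X k ω)} ⊆
      ⋃ j : Fin d, ({ω | α ≤ (((X m ω - X k ω) j : ℤ) : ℝ)} ∪
        {ω | α ≤ (-1 : ℝ) * (((X m ω - X k ω) j : ℤ) : ℝ)}) := by
    intro ω hω
    obtain ⟨j, hj⟩ := exists_coord hα hω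
    refine Set.mem_iUnion.2 ⟨j, ?_⟩
    rcases hj with h | h
    · exact Or.inl h
    · exact Or.inr (by simpa using h)
  calc P {ω | α ≤ linf (X m ω - X k ω)}
      ≤ ∑' j : Fin d, P ({ω | α ≤ (((X m ω - X k ω) j : ℤ) : ℝ)} ∪
          {ω | α ≤ (-1 : ℝ) * (((X m ω - X k ω) j : ℤ) : ℝ)}) :=
        (measure_mono hsub).trans (measure_iUnion_le _)
    _ ≤ ∑' _j : Fin d, (ENNReal.ofReal e + ENNReal.ofReal e) := by
        refine ENNReal.tsum_le_tsum fun j => ?_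
        refine (measure_union_le _ _).trans ?_
        have h1 := key j 1 (Or.inl rfl)
        simp only [one_mul] at h1
        exact add_le_add h1 (key j (-1) (Or.inr rfl))
    _ = (d : ℝ≥0∞) * (ENNReal.ofReal e + ENNReal.ofReal e) := by
        rw [tsum_fintype]
        simp [Finset.sum_const, Fintype.card_fin]
        ring
    _ ≤ ENNReal.ofReal ((2 * d) * e) := by
        rw [← ENNReal.ofReal_add he0.le he0.le]
        rw [← ENNReal.ofReal_natCast d]
        rw [← ENNReal.ofReal_mul (by positivity)]
        apply ENNReal.ofReal_le_ofReal
        nlinarith [he0.le]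

lemma linf_sub_comm (x y : Fin d → ℤ) : linf (x - y) = linf (y - x) := by
  unfold linf
  congr 1
  apply Finset.sup_congr rfl
  intro j _
  have : (x - y) j = -((y - x) j) := by simp [Pi.sub_apply]
  rw [this, Int.natAbs_neg]

lemma indep_first (hX : IsSRW P d X 0) {k m : ℕ} (hkm : k ≤ m) (α : ℝ) :
    P ({ω | 2 * α ≤ linf (X k ω) ∧ ∀ j < k, linf (X j ω) < 2 * α} ∩
        {ω | α ≤ linf (X m ω - X k ω)}) =
      P {ω | 2 * α ≤ linf (X k ω) ∧ ∀ j < k, linf (X j ω) < 2 * α} *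
        P {ω | α ≤ linf (X m ω - X k ω)} := by
  classical
  set ξ : ℕ → Ω → (Fin d → ℤ) := fun i ω => X (i + 1) ω - X i ω with hξ
  have hdisj : Disjoint (Finset.range k) (Finset.Ico k m) := by
    rw [Finset.disjoint_left]
    intro a ha ha'
    rw [Finset.mem_range] at ha
    rw [Finset.mem_Ico] at ha'
    omega
  have H : IndepFun (fun ω (i : (Finset.range k : Finset ℕ)) => ξ i ω)
      (fun ω (i : (Finset.Ico k m : Finset ℕ)) => ξ i ω) P :=
    iIndepFun.indepFun_finset (Finset.range k) (Finset.Ico k m) hdisj hX.2.2.1 (meas_incr hX)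
  set S₁ : Set ({x // x ∈ Finset.range k} → (Fin d → ℤ)) :=
    {g | 2 * α ≤ linf (∑ i ∈ (Finset.range k).attach, if (i : ℕ) < k then g i else 0) ∧
      ∀ j < k, linf (∑ i ∈ (Finset.range k).attach, if (i : ℕ) < j then g i else 0) < 2 * α}
    with hS₁
  set S₂ : Set ({x // x ∈ Finset.Ico k m} → (Fin d → ℤ)) :=
    {g | α ≤ linf (∑ i ∈ (Finset.Ico k m).attach, g i)} with hS₂
  have hpsum : ∀ ω, ∀ j ≤ k,
      (∑ i ∈ (Finset.range k).attach, if (i : ℕ) < j then ξ i ω else 0) = X j ω := by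
    intro ω j hj
    rw [Finset.sum_attach (Finset.range k) (fun i => if i < j then ξ i ω else 0)]
    rw [← Finset.sum_filter]
    have : (Finset.range k).filter (· < j) = Finset.range j := by
      ext i
      simp only [Finset.mem_filter, Finset.mem_range]
      omega
    rw [this, ← X_eq_sum hX j ω]
  have hpre1 : {ω | 2 * α ≤ linf (X k ω) ∧ ∀ j < k, linf (X j ω) < 2 * α} =
      (fun ω (i : (Finset.range k : Finset ℕ)) => ξ i ω) ⁻¹' S₁ := by
    ext ω
    simp only [Set.mem_preimage, hS₁, Set.mem_setOf_eq]
    constructor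
    · rintro ⟨h1, h2⟩
      refine ⟨?_, fun j hj => ?_⟩
      · rw [hpsum ω k le_rfl]; exact h1
      · rw [hpsum ω j hj.le]; exact h2 j hj
    · rintro ⟨h1, h2⟩
      rw [hpsum ω k le_rfl] at h1
      refine ⟨h1, fun j hj => ?_⟩
      have := h2 j hj
      rwa [hpsum ω j hj.le] at this
  have hpre2 : {ω | α ≤ linf (X m ω - X k ω)} =
      (fun ω (i : (Finset.Ico k m : Finset ℕ)) => ξ i ω) ⁻¹' S₂ := by
    ext ω
    simp only [Set.mem_preimage, hS₂, Set.mem_setOf_eq]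
    rw [Finset.sum_attach (Finset.Ico k m) (fun i => ξ i ω), ← X_sub_eq_sum hX hkm ω]
  rw [hpre1, hpre2]
  exact H.measure_inter_preimage_eq_mul S₁ S₂ MeasurableSet.of_discrete MeasurableSet.of_discrete

lemma maximal (hX : IsSRW P d X 0) (hd : 0 < d) {m : ℕ} {α l : ℝ} (hα : 0 < α) (hl : 0 ≤ l) :
    P {ω | ∃ i ≤ m, 2 * α ≤ linf (X i ω)} ≤
      ENNReal.ofReal (4 * d * Real.exp (l ^ 2 * m / 2 - l * α)) := by
  haveI : IsProbabilityMeasure P := hX.2.2.1.isProbabilityMeasure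
  set q : ℝ := 2 * d * Real.exp (l ^ 2 * m / 2 - l * α) with hq
  have hq0 : 0 ≤ q := by positivity
  set A : ℕ → Set Ω := fun k =>
    {ω | 2 * α ≤ linf (X k ω) ∧ ∀ j < k, linf (X j ω) < 2 * α} with hA
  set B : ℕ → Set Ω := fun k => {ω | α ≤ linf (X m ω - X k ω)} with hB
  have hAmeas : ∀ k, MeasurableSet (A k) := by
    intro k
    have : A k = (X k ⁻¹' {v | 2 * α ≤ linf v}) ∩
        ⋂ j ∈ Finset.range k, (X j ⁻¹' {v | linf v < 2 * α}) := by
      ext ω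
      simp only [hA, Set.mem_setOf_eq, Set.mem_inter_iff, Set.mem_preimage, Set.mem_iInter,
        Finset.mem_range]
    rw [this]
    exact ((hX.2.1 k) MeasurableSet.of_discrete).inter
      (MeasurableSet.biInter (Finset.range k).countable_toSet
        fun j _ => (hX.2.1 j) MeasurableSet.of_discrete)
  have hBmeas : ∀ k, MeasurableSet (B k) := by
    intro k
    have : B k = (fun ω => (X m ω, X k ω)) ⁻¹' {p | α ≤ linf (p.1 - p.2)} := rfl
    rw [this]
    exact ((hX.2.1 m).prodMk (hX.2.1 k)) MeasurableSet.of_discrete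
  have hdisjA : Set.PairwiseDisjoint (↑(Finset.range (m + 1))) A := by
    intro a _ b _ hab
    rcases Nat.lt_or_ge a b with h | h
    · refine Set.disjoint_left.2 fun ω h1 h2 => ?_
      have := h2.2 a h
      linarith [h1.1]
    · have h' : b < a := by omega
      refine Set.disjoint_left.2 fun ω h1 h2 => ?_
      have := h1.2 b h'
      linarith [h2.1]
  have hcover : {ω | ∃ i ≤ m, 2 * α ≤ linf (X i ω)} = ⋃ k ∈ Finset.range (m + 1), A k := by
    ext ω
    simp only [Set.mem_setOf_eq, Set.mem_iUnion, Finset.mem_range]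
    constructor
    · rintro ⟨i, him, hi⟩
      have hex : ∃ n, 2 * α ≤ linf (X n ω) := ⟨i, hi⟩
      have hfind : Nat.find hex ≤ i := Nat.find_min' hex hi
      refine ⟨Nat.find hex, by omega, Nat.find_spec hex, fun j hj => ?_⟩
      exact lt_of_not_ge (Nat.find_min hex hj)
    · rintro ⟨k, hk, h1, _⟩
      exact ⟨k, by omega, h1⟩
  have hBq : ∀ k, k ≤ m → (P (B k)).toReal ≤ q := by
    intro k hk
    exact ENNReal.toReal_le_of_le_ofReal hq0 (chernoff_window hX hd hk hα hl)
  have hsum : (P {ω | ∃ i ≤ m, 2 * α ≤ linf (X i ω)}).toReal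
      = ∑ k ∈ Finset.range (m + 1), (P (A k)).toReal := by
    rw [hcover, measure_biUnion_finset hdisjA fun k _ => hAmeas k]
    exact ENNReal.toReal_sum fun k _ => measure_ne_top P _
  have hAk_le : ∀ k ∈ Finset.range (m + 1),
      (P (A k)).toReal ≤ (P (A k)).toReal * q + (P (A k ∩ B 0)).toReal := by
    intro k hk
    rw [Finset.mem_range] at hk
    have hkm : k ≤ m := by omega
    have hsubk : A k ⊆ (A k ∩ B k) ∪ (A k ∩ B 0) := by
      intro ω hω
      by_cases hb : ω ∈ B 0
      · exact Or.inr ⟨hω, hb⟩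
      · left
        refine ⟨hω, ?_⟩
        have h1 : 2 * α ≤ linf (X k ω) := hω.1
        simp only [hB, Set.mem_setOf_eq] at hb ⊢
        push_neg at hb
        have h0 : X 0 ω = 0 := hX.1 ω
        have htri := linf_triangle (X k ω) (X m ω)
        have h2 : linf (X m ω - X 0 ω) = linf (X m ω) := by rw [h0, sub_zero]
        have h3 : linf (X k ω - X m ω) = linf (X m ω - X k ω) := linf_sub_comm _ _
        rw [h2] at hb
        by_contra hc
        push_neg at hc
        rw [← h3] at hc
        linarith
    have hPAB : P (A k ∩ B k) = P (A k) * P (B k) := by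
      rw [hA, hB]
      exact indep_first hX hkm α
    calc (P (A k)).toReal ≤ (P ((A k ∩ B k) ∪ (A k ∩ B 0))).toReal :=
          ENNReal.toReal_mono (measure_ne_top P _) (measure_mono hsubk)
      _ ≤ (P (A k ∩ B k) + P (A k ∩ B 0)).toReal := by
          refine ENNReal.toReal_mono ?_ (measure_union_le _ _)
          exact ENNReal.add_ne_top.2 ⟨measure_ne_top P _, measure_ne_top P _⟩
      _ = (P (A k ∩ B k)).toReal + (P (A k ∩ B 0)).toReal :=
          ENNReal.toReal_add (measure_ne_top P _) (measure_ne_top P _)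
      _ ≤ (P (A k)).toReal * q + (P (A k ∩ B 0)).toReal := by
          refine add_le_add_left ?_ _
          rw [hPAB, ENNReal.toReal_mul]
          exact mul_le_mul_of_nonneg_left (hBq k hkm) ENNReal.toReal_nonneg
  have hsumB : ∑ k ∈ Finset.range (m + 1), (P (A k ∩ B 0)).toReal ≤ q := by
    have hd2 : Set.PairwiseDisjoint (↑(Finset.range (m + 1))) (fun k => A k ∩ B 0) := by
      intro a ha b hb hab
      exact (hdisjA ha hb hab).mono Set.inter_subset_left Set.inter_subset_left
    have heq : ∑ k ∈ Finset.range (m + 1), P (A k ∩ B 0)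
        = P (⋃ k ∈ Finset.range (m + 1), (A k ∩ B 0)) :=
      (measure_biUnion_finset hd2 fun k _ => (hAmeas k).inter (hBmeas 0)).symm
    calc ∑ k ∈ Finset.range (m + 1), (P (A k ∩ B 0)).toReal
        = (∑ k ∈ Finset.range (m + 1), P (A k ∩ B 0)).toReal :=
          (ENNReal.toReal_sum fun k _ => measure_ne_top P _).symm
      _ = (P (⋃ k ∈ Finset.range (m + 1), (A k ∩ B 0))).toReal := by rw [heq]
      _ ≤ (P (B 0)).toReal := by
          refine ENNReal.toReal_mono (measure_ne_top P _) (measure_mono ?_)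
          intro ω hω
          rw [Set.mem_iUnion] at hω
          obtain ⟨k, hk⟩ := hω
          rw [Set.mem_iUnion] at hk
          obtain ⟨_, hk⟩ := hk
          exact hk.2
      _ ≤ q := hBq 0 (Nat.zero_le m)
  set p : ℝ := (P {ω | ∃ i ≤ m, 2 * α ≤ linf (X i ω)}).toReal with hp
  have hple : p ≤ q * p + q := by
    rw [hsum]
    calc ∑ k ∈ Finset.range (m + 1), (P (A k)).toReal
        ≤ ∑ k ∈ Finset.range (m + 1), ((P (A k)).toReal * q + (P (A k ∩ B 0)).toReal) :=
          Finset.sum_le_sum hAk_le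
      _ = (∑ k ∈ Finset.range (m + 1), (P (A k)).toReal) * q
            + ∑ k ∈ Finset.range (m + 1), (P (A k ∩ B 0)).toReal := by
          rw [Finset.sum_add_distrib, Finset.sum_mul]
      _ ≤ q * (∑ k ∈ Finset.range (m + 1), (P (A k)).toReal) + q := by
          rw [mul_comm]
          exact add_le_add_right hsumB _
  have hp1 : p ≤ 1 := by
    rw [hp]
    refine ENNReal.toReal_le_of_le_ofReal zero_le_one ?_
    rw [ENNReal.ofReal_one]
    exact prob_le_one
  have hp0 : 0 ≤ p := ENNReal.toReal_nonneg
  have hfinal : p ≤ 2 * q := by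
    rcases le_or_gt q (1 / 2) with h | h
    · nlinarith
    · linarith
  have : P {ω | ∃ i ≤ m, 2 * α ≤ linf (X i ω)} = ENNReal.ofReal p := by
    rw [hp, ENNReal.ofReal_toReal (measure_ne_top P _)]
  rw [this]
  refine ENNReal.ofReal_le_ofReal ?_
  rw [hq] at hfinal
  linarith

end Walk

section Geom

lemma geom_tail {Ω : Type} [MeasurableSpace Ω] {P : Measure Ω} {T : ℝ} {N : Ω → ℕ}
    (hT : 1 ≤ T) (hN : IsGeom P T N) (m : ℕ) :
    P {ω | m + 1 ≤ N ω} ≤ ENNReal.ofReal (Real.exp (-((m + 1 : ℕ) : ℝ) / (T + 1))) := by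
  have hT0 : (0 : ℝ) < T + 1 := by linarith
  set r : ℝ := T / (T + 1) with hr
  have hr0 : 0 ≤ r := by positivity
  have hr1 : r < 1 := by rw [hr, div_lt_one hT0]; linarith
  have hsub : {ω | m + 1 ≤ N ω} ⊆ ⋃ k : ℕ, {ω | N ω = (m + 1) + k} := by
    intro ω hω
    simp only [Set.mem_setOf_eq] at hω
    exact Set.mem_iUnion.2 ⟨N ω - (m + 1), by simp only [Set.mem_setOf_eq]; omega⟩
  have hsummable : Summable (fun k : ℕ => (1 / (T + 1)) * r ^ ((m + 1) + k)) := by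
    have : Summable (fun k : ℕ => r ^ k) := summable_geometric_of_lt_one hr0 hr1
    have h2 : Summable (fun k : ℕ => ((1 / (T + 1)) * r ^ (m + 1)) * r ^ k) := this.mul_left _
    refine h2.congr fun k => ?_
    rw [pow_add]; ring
  have hnonneg : ∀ k : ℕ, 0 ≤ (1 / (T + 1)) * r ^ ((m + 1) + k) := by
    intro k; positivity
  have htsum : ∑' k : ℕ, (1 / (T + 1)) * r ^ ((m + 1) + k) = r ^ (m + 1) := by
    have h1 : ∀ k : ℕ, (1 / (T + 1)) * r ^ ((m + 1) + k)
        = ((1 / (T + 1)) * r ^ (m + 1)) * r ^ k := by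
      intro k; rw [pow_add]; ring
    rw [tsum_congr h1, tsum_mul_left, tsum_geometric_of_lt_one hr0 hr1]
    have h2 : 1 - r = 1 / (T + 1) := by
      rw [hr]; field_simp; ring
    rw [h2]
    field_simp
  calc P {ω | m + 1 ≤ N ω} ≤ ∑' k : ℕ, P {ω | N ω = (m + 1) + k} :=
        (measure_mono hsub).trans (measure_iUnion_le _)
    _ = ∑' k : ℕ, ENNReal.ofReal ((1 / (T + 1)) * r ^ ((m + 1) + k)) :=
        tsum_congr fun k => hN.2 _
    _ = ENNReal.ofReal (∑' k : ℕ, (1 / (T + 1)) * r ^ ((m + 1) + k)) :=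
        (ENNReal.ofReal_tsum_of_nonneg hnonneg hsummable).symm
    _ = ENNReal.ofReal (r ^ (m + 1)) := by rw [htsum]
    _ ≤ ENNReal.ofReal (Real.exp (-((m + 1 : ℕ) : ℝ) / (T + 1))) := by
        refine ENNReal.ofReal_le_ofReal ?_
        have hre : r ≤ Real.exp (-(1 / (T + 1))) := by
          have := Real.add_one_le_exp (-(1 / (T + 1)))
          have h2 : r = -(1 / (T + 1)) + 1 := by rw [hr]; field_simp; ring
          linarith
        calc r ^ (m + 1) ≤ Real.exp (-(1 / (T + 1))) ^ (m + 1) :=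
              pow_le_pow_left₀ hr0 hre _
          _ = Real.exp (((m + 1 : ℕ) : ℝ) * (-(1 / (T + 1)))) := by
              rw [← Real.exp_nat_mul]
          _ = Real.exp (-((m + 1 : ℕ) : ℝ) / (T + 1)) := by
              congr 1; field_simp
end Geom

lemma nT_facts {T : ℝ} (hT : 1 ≤ T) : 1 ≤ nT T ∧ Real.sqrt T / 2 ≤ (nT T : ℝ) := by
  have hu1 : 1 ≤ Real.sqrt T := by
    rw [show (1:ℝ) = Real.sqrt 1 by rw [Real.sqrt_one]]
    exact Real.sqrt_le_sqrt hT
  have h1 : 1 ≤ nT T := Nat.le_floor (by exact_mod_cast hu1)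
  refine ⟨h1, ?_⟩
  have hlow : Real.sqrt T < (nT T : ℝ) + 1 := Nat.lt_floor_add_one _
  have h1' : (1 : ℝ) ≤ (nT T : ℝ) := by exact_mod_cast h1
  rcases le_or_gt (Real.sqrt T) 2 with h | h
  · linarith
  · linarith

end Helpers

set_option maxHeartbeats 2000000 in
/-- For every `d ≥ 3` there are `C, c > 0` such that for all `T ≥ 1` and `t > 0`,
a simple random walk on `ℤ^d` started at `0`, killed at an independent geometric time `N_T`,
satisfies `P(max_{0 ≤ i ≤ N_T} |X_i| ≥ t ⌊√T⌋) ≤ C exp(−c t^{2/3})`. -/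
theorem stmt0 :
    ∀ d : ℕ, 3 ≤ d → ∃ C c : ℝ, 0 < C ∧ 0 < c ∧
      ∀ T : ℝ, 1 ≤ T → ∀ t : ℝ, 0 < t →
      ∀ (Ω : Type) [MeasurableSpace Ω] (P : Measure Ω) [IsProbabilityMeasure P]
        (X : ℕ → Ω → (Fin d → ℤ)) (N : Ω → ℕ),
        IsSRW P d X 0 → IsGeom P T N →
        IndepFun (fun ω k => X k ω) N P →
        P {ω | ∃ i ≤ N ω, t * (nT T : ℝ) ≤ linf (X i ω)} ≤
          ENNReal.ofReal (C * Real.exp (-c * t ^ ((2 : ℝ) / 3))) := by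
  intro d hd
  refine ⟨(4 * d + 1) * Real.exp (1 / 64), 1 / 64, by positivity, by norm_num, ?_⟩
  intro T hT t ht Ω _ P _ X N hX hN _
  have hd0 : 0 < d := by omega
  have hd3 : (3 : ℝ) ≤ (d : ℝ) := by exact_mod_cast hd
  obtain ⟨u, hu⟩ : ∃ y : ℝ, y = t ^ ((2 : ℝ) / 3) := ⟨_, rfl⟩
  rw [show (-(1 / 64 : ℝ) * t ^ ((2 : ℝ) / 3)) = -(1 / 64) * u by rw [hu]]
  have hu0 : 0 < u := by rw [hu]; exact Real.rpow_pos_of_pos ht _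
  by_cases hcase : t ≤ 1
  · -- trivial regime
    have hu1 : u ≤ 1 := by rw [hu]; exact Real.rpow_le_one ht.le hcase (by norm_num)
    calc P {ω | ∃ i ≤ N ω, t * (nT T : ℝ) ≤ linf (X i ω)} ≤ 1 := prob_le_one
      _ ≤ ENNReal.ofReal ((4 * d + 1) * Real.exp (1 / 64) * Real.exp (-(1 / 64) * u)) := by
          rw [← ENNReal.ofReal_one]
          refine ENNReal.ofReal_le_ofReal ?_
          rw [mul_assoc, ← Real.exp_add]
          have h1 : (0 : ℝ) ≤ 1 / 64 + -(1 / 64) * u := by nlinarith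
          have h2 : (1 : ℝ) ≤ Real.exp (1 / 64 + -(1 / 64) * u) := by
            nlinarith [Real.add_one_le_exp (1 / 64 + -(1 / 64) * u)]
          nlinarith
  · push_neg at hcase
    have ht1 : 1 ≤ t := hcase.le
    have hu1 : 1 ≤ u := by rw [hu]; exact Real.one_le_rpow ht1 (by norm_num)
    have hT0 : (0 : ℝ) < T := by linarith
    have huT : 1 ≤ u * T := by nlinarith
    obtain ⟨m, hm⟩ : ∃ n : ℕ, n = Nat.ceil (u * T) := ⟨_, rfl⟩
    have hm1 : 1 ≤ m := by rw [hm]; exact Nat.one_le_ceil_iff.2 (by nlinarith)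
    have hmge : u * T ≤ (m : ℝ) := by rw [hm]; exact Nat.le_ceil _
    have hmle : (m : ℝ) ≤ 2 * u * T := by
      have h2 : (m : ℝ) < u * T + 1 := by
        rw [hm]; exact Nat.ceil_lt_add_one (by positivity : (0:ℝ) ≤ u * T)
      nlinarith
    have hm0 : (0 : ℝ) < m := by exact_mod_cast hm1
    obtain ⟨hnT1, hnT2⟩ := nT_facts hT
    have hnT1' : (1 : ℝ) ≤ (nT T : ℝ) := by exact_mod_cast hnT1
    obtain ⟨α, hα⟩ : ∃ y : ℝ, y = t * (nT T : ℝ) / 2 := ⟨_, rfl⟩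
    have hα0 : 0 < α := by rw [hα]; positivity
    obtain ⟨l, hl⟩ : ∃ y : ℝ, y = α / m := ⟨_, rfl⟩
    have hl0 : 0 ≤ l := by rw [hl]; positivity
    -- exponent bounds
    have hu3 : u ^ 3 = t ^ 2 := by
      rw [hu, ← Real.rpow_natCast (t ^ ((2:ℝ)/3)) 3, ← Real.rpow_mul ht.le]
      norm_num
    have hsqrtT : Real.sqrt T ^ 2 = T := Real.sq_sqrt hT0.le
    have hαlow : Real.sqrt T * t / 4 ≤ α := by
      rw [hα]
      nlinarith [mul_le_mul_of_nonneg_left hnT2 ht.le, Real.sqrt_nonneg T]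
    have hexp1 : l ^ 2 * m / 2 - l * α ≤ -u / 64 := by
      rw [hl]
      have hαsq : t ^ 2 * T / 16 ≤ α ^ 2 := by
        have h := mul_le_mul hαlow hαlow (by positivity) hα0.le
        nlinarith [hsqrtT]
      have key : u / 64 ≤ α ^ 2 / (2 * m) := by
        rw [le_div_iff₀ (by positivity)]
        have h1 : 2 * (m : ℝ) ≤ 4 * u * T := by nlinarith
        have h2 : u ^ 3 * T / 16 ≤ α ^ 2 := by rw [hu3]; exact hαsq
        have hA := mul_le_mul_of_nonneg_left h1 hu0.le
        have hC : u ^ 2 * T ≤ u ^ 3 * T := by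
          have hh := mul_le_mul_of_nonneg_left hu1 (by positivity : (0:ℝ) ≤ u ^ 2 * T)
          nlinarith [hh]
        nlinarith [hA, hC, h2]
      have heq : (α / m) ^ 2 * m / 2 - (α / m) * α = -(α ^ 2 / (2 * m)) := by
        field_simp
        ring
      rw [heq]
      linarith
    have hexp2 : -(((m + 1 : ℕ) : ℝ)) / (T + 1) ≤ -u / 64 := by
      have hm1' : u * T ≤ ((m + 1 : ℕ) : ℝ) := by push_cast; linarith
      rw [div_le_div_iff₀ (by linarith) (by norm_num)]
      nlinarith
    -- event inclusion
    have hsub : {ω | ∃ i ≤ N ω, t * (nT T : ℝ) ≤ linf (X i ω)} ⊆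
        {ω | ∃ i ≤ m, 2 * α ≤ linf (X i ω)} ∪ {ω | m + 1 ≤ N ω} := by
      intro ω hω
      obtain ⟨i, hiN, hlinf⟩ := hω
      by_cases hNm : N ω ≤ m
      · exact Or.inl ⟨i, le_trans hiN hNm, by rw [hα]; linarith⟩
      · exact Or.inr (by simp only [Set.mem_setOf_eq]; omega)
    -- combine
    calc P {ω | ∃ i ≤ N ω, t * (nT T : ℝ) ≤ linf (X i ω)}
        ≤ P ({ω | ∃ i ≤ m, 2 * α ≤ linf (X i ω)} ∪ {ω | m + 1 ≤ N ω}) := measure_mono hsub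
      _ ≤ P {ω | ∃ i ≤ m, 2 * α ≤ linf (X i ω)} + P {ω | m + 1 ≤ N ω} := measure_union_le _ _
      _ ≤ ENNReal.ofReal (4 * d * Real.exp (l ^ 2 * m / 2 - l * α))
            + ENNReal.ofReal (Real.exp (-((m + 1 : ℕ) : ℝ) / (T + 1))) :=
          add_le_add (maximal hX hd0 hα0 hl0) (geom_tail hT hN m)
      _ ≤ ENNReal.ofReal (4 * d * Real.exp (-u / 64))
            + ENNReal.ofReal (Real.exp (-u / 64)) := by
          refine add_le_add (ENNReal.ofReal_le_ofReal ?_) (ENNReal.ofReal_le_ofReal ?_)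
          · have := Real.exp_le_exp.2 hexp1
            nlinarith [Real.exp_pos (l ^ 2 * m / 2 - l * α)]
          · exact Real.exp_le_exp.2 hexp2
      _ = ENNReal.ofReal ((4 * d + 1) * Real.exp (-u / 64)) := by
          rw [← ENNReal.ofReal_add (by positivity) (by positivity)]
          congr 1
          ring
      _ ≤ ENNReal.ofReal ((4 * d + 1) * Real.exp (1 / 64) * Real.exp (-(1 / 64) * u)) := by
          refine ENNReal.ofReal_le_ofReal ?_
          rw [mul_assoc, ← Real.exp_add]
          have h1 : -u / 64 ≤ 1 / 64 + -(1 / 64) * u := by nlinarith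
          have h2 : Real.exp (-u / 64) ≤ Real.exp (1 / 64 + -(1 / 64) * u) :=
            Real.exp_le_exp.2 h1
          nlinarith [Real.exp_pos (-u / 64)]

end
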